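/- For every real number x ≥ 8, the product of all primes p ≤ x satisfies ∏_{p ≤ x} p < 4^x/√(54·x^3). -/

import Mathlib

open Finset Nat

lemma cb_sq (k : ℕ) : (Nat.centralBinom k) ^ 2 * (3 * k + 1) ≤ 16 ^ k := by
  induction k with
  | zero => decide
  | succ k ih =>
    have h := Nat.succ_mul_centralBinom_succ k
    have key : (k + 1) ^ 2 * (3 * k + 1) * ((Nat.centralBinom (k + 1)) ^ 2 * (3 * (k + 1) + 1))
        ≤ (k + 1) ^ 2 * (3 * k + 1) * 16 ^ (k + 1) := by
      calc (k + 1) ^ 2 * (3 * k + 1) * ((Nat.centralBinom (k + 1)) ^ 2 * (3 * (k + 1) + 1))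
          = (3 * k + 4) * (3 * k + 1) * ((k + 1) * Nat.centralBinom (k + 1)) ^ 2 := by ring
        _ = (3 * k + 4) * (3 * k + 1) * (2 * (2 * k + 1) * Nat.centralBinom k) ^ 2 := by rw [h]
        _ = 4 * (2 * k + 1) ^ 2 * (3 * k + 4) * ((Nat.centralBinom k) ^ 2 * (3 * k + 1)) := by
            ring
        _ ≤ 4 * (2 * k + 1) ^ 2 * (3 * k + 4) * 16 ^ k := Nat.mul_le_mul_left _ ih
        _ ≤ 16 * ((k + 1) ^ 2 * (3 * k + 1)) * 16 ^ k := Nat.mul_le_mul_right _ (by nlinarith)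
        _ = (k + 1) ^ 2 * (3 * k + 1) * 16 ^ (k + 1) := by ring
    exact Nat.le_of_mul_le_mul_left key (by positivity)

lemma choose_sq (m : ℕ) : 4 * ((2 * m + 1).choose m) ^ 2 * (3 * m + 4) ≤ 16 ^ (m + 1) := by
  have hcb : Nat.centralBinom (m + 1) = 2 * (2 * m + 1).choose m := by
    have : 2 * (m + 1) = 2 * m + 1 + 1 := by ring
    rw [Nat.centralBinom, this, Nat.choose_succ_succ, Nat.choose_symm_half]; ring
  have := cb_sq (m + 1)
  rw [hcb] at this
  calc 4 * ((2 * m + 1).choose m) ^ 2 * (3 * m + 4)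
      = (2 * (2 * m + 1).choose m) ^ 2 * (3 * (m + 1) + 1) := by ring
    _ ≤ 16 ^ (m + 1) := this

lemma main_nat : ∀ n, 8 ≤ n → (primorial n) ^ 2 * (54 * (n + 1) ^ 3) ≤ 16 ^ n := by
  intro n
  induction n using Nat.strong_induction_on with
  | _ n ih =>
  intro hn
  by_cases h15 : n < 15
  · interval_cases n <;> decide
  · push_neg at h15
    rcases Nat.even_or_odd n with he | ho
    · obtain ⟨k, rfl⟩ : ∃ k, n = k + 1 := ⟨n - 1, by omega⟩
      have hk : Odd k := by
        rw [Nat.even_add_one] at he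
        exact Nat.not_even_iff_odd.mp (by tauto)
      have heq : primorial (k + 1) = primorial k := primorial_succ (by omega) hk
      have ihk := ih k (by omega) (by omega)
      rw [heq]
      have h1 : primorial k ^ 2 * (54 * (k + 1 + 1) ^ 3) * (k + 1) ^ 3
          ≤ 16 ^ (k + 1) * (k + 1) ^ 3 := by
        calc primorial k ^ 2 * (54 * (k + 1 + 1) ^ 3) * (k + 1) ^ 3
            = primorial k ^ 2 * (54 * (k + 1) ^ 3) * (k + 2) ^ 3 := by ring
          _ ≤ 16 ^ k * (k + 2) ^ 3 := Nat.mul_le_mul_right _ ihk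
          _ ≤ 16 ^ k * (16 * (k + 1) ^ 3) := by
              refine Nat.mul_le_mul_left _ ?_
              calc (k + 2) ^ 3 ≤ (2 * (k + 1)) ^ 3 := Nat.pow_le_pow_left (by omega) 3
                _ = 8 * (k + 1) ^ 3 := by ring
                _ ≤ 16 * (k + 1) ^ 3 := Nat.mul_le_mul_right _ (by norm_num)
          _ = 16 ^ (k + 1) * (k + 1) ^ 3 := by ring
      exact Nat.le_of_mul_le_mul_right h1 (by positivity)
    · obtain ⟨m, rfl⟩ := ho
      have hm : 7 ≤ m := by omega
      have hp : primorial (2 * m + 1) ≤ primorial (m + 1) * (2 * m + 1).choose m := by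
        calc primorial (2 * m + 1) = primorial (m + 1 + m) := by rw [two_mul, add_right_comm]
          _ ≤ primorial (m + 1) * (m + 1 + m).choose (m + 1) := primorial_add_le m.le_succ
          _ = primorial (m + 1) * (2 * m + 1).choose m := by
              rw [Nat.choose_symm_add, two_mul, add_right_comm]
      have ihm := ih (m + 1) (by omega) (by omega)
      have hc := choose_sq m
      have key : primorial (2 * m + 1) ^ 2 * (54 * (2 * m + 1 + 1) ^ 3)
            * (54 * (m + 2) ^ 3 * (3 * m + 4))
          ≤ 16 ^ (2 * m + 1) * (54 * (m + 2) ^ 3 * (3 * m + 4)) := by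
        calc primorial (2 * m + 1) ^ 2 * (54 * (2 * m + 1 + 1) ^ 3)
              * (54 * (m + 2) ^ 3 * (3 * m + 4))
            ≤ (primorial (m + 1) * (2 * m + 1).choose m) ^ 2 * (54 * (2 * m + 1 + 1) ^ 3)
              * (54 * (m + 2) ^ 3 * (3 * m + 4)) := by
              exact Nat.mul_le_mul_right _ (Nat.mul_le_mul_right _ (Nat.pow_le_pow_left hp 2))
          _ = (primorial (m + 1) ^ 2 * (54 * (m + 1 + 1) ^ 3))
              * ((4 * ((2 * m + 1).choose m) ^ 2 * (3 * m + 4)) * (108 * (m + 1) ^ 3)) := by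
              ring
          _ ≤ 16 ^ (m + 1) * (16 ^ (m + 1) * (108 * (m + 1) ^ 3)) :=
              Nat.mul_le_mul ihm (Nat.mul_le_mul_right _ hc)
          _ = 16 ^ (2 * m + 1) * (1728 * (m + 1) ^ 3) := by ring
          _ ≤ 16 ^ (2 * m + 1) * (54 * (m + 2) ^ 3 * (3 * m + 4)) := by
              refine Nat.mul_le_mul_left _ ?_
              obtain ⟨t, rfl⟩ : ∃ t, m = t + 7 := ⟨m - 7, by omega⟩
              nlinarith [t.zero_le, sq_nonneg t]
      exact Nat.le_of_mul_le_mul_right key (by positivity)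

theorem stmt_13 (x : ℝ) (hx : 8 ≤ x) :
    ((∏ p ∈ (Finset.range (⌊x⌋₊ + 1)).filter Nat.Prime, p : ℕ) : ℝ) <
      (4 : ℝ) ^ x / Real.sqrt (54 * x ^ 3) := by
  have hprod : (∏ p ∈ (Finset.range (⌊x⌋₊ + 1)).filter Nat.Prime, p) = primorial ⌊x⌋₊ := rfl
  rw [hprod]
  set n := ⌊x⌋₊ with hndef
  have hn8 : 8 ≤ n := Nat.le_floor (by exact_mod_cast hx)
  have hx0 : (0 : ℝ) < x := by linarith
  have hxn : x < (n : ℝ) + 1 := Nat.lt_floor_add_one x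
  have hnx : (n : ℝ) ≤ x := Nat.floor_le hx0.le
  have hnat := main_nat n hn8
  have hs : 0 < Real.sqrt (54 * x ^ 3) := Real.sqrt_pos.mpr (by positivity)
  rw [lt_div_iff₀ hs]
  have h4 : (0 : ℝ) < (4 : ℝ) ^ x := Real.rpow_pos_of_pos (by norm_num) x
  refine lt_of_pow_lt_pow_left₀ 2 h4.le ?_
  have hsq : (Real.sqrt (54 * x ^ 3)) ^ 2 = 54 * x ^ 3 := Real.sq_sqrt (by positivity)
  have h16 : ((4 : ℝ) ^ x) ^ 2 = (16 : ℝ) ^ x := by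
    rw [sq, ← Real.mul_rpow (by norm_num) (by norm_num)]; norm_num
  have hfpos : 0 < primorial n := primorial_pos n
  have hcast : ((primorial n : ℝ)) ^ 2 * (54 * ((n : ℝ) + 1) ^ 3) ≤ (16 : ℝ) ^ (n : ℕ) := by
    exact_mod_cast Nat.cast_le.mpr hnat
  calc ((primorial n : ℝ) * Real.sqrt (54 * x ^ 3)) ^ 2
      = (primorial n : ℝ) ^ 2 * (54 * x ^ 3) := by rw [mul_pow, hsq]
    _ < (primorial n : ℝ) ^ 2 * (54 * ((n : ℝ) + 1) ^ 3) := by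
        have hx3 : x ^ 3 < ((n : ℝ) + 1) ^ 3 := by
          exact pow_lt_pow_left₀ hxn hx0.le (by norm_num)
        have hp2 : (0 : ℝ) < (primorial n : ℝ) ^ 2 := by positivity
        nlinarith
    _ ≤ (16 : ℝ) ^ (n : ℕ) := hcast
    _ ≤ (16 : ℝ) ^ x := by
        rw [← Real.rpow_natCast 16 n]
        exact Real.rpow_le_rpow_of_exponent_le (by norm_num) hnx
    _ = ((4 : ℝ) ^ x) ^ 2 := h16.symm
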